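/- For fixed β > 0 and γ_e > 0, the function ρ ↦ γ_e·g(β,ρ)·(1 + (ρ/β)(1+g(β,ρ))²)/(γ_e + (1+g(β,ρ))²) on (0,∞), where g(β,ρ) is the unique nonnegative solution of g = 1/(ρ + β/(1+g)), attains its maximum at ρ* = β/γ_e, and the maximum value equals g(β, β/γ_e). -/

import Mathlib

set_option maxHeartbeats 1000000 in
theorem mcp_sinr_optimal_regularization (β γe : ℝ) (hβ : 0 < β) (hγe : 0 < γe)
    (g : ℝ → ℝ)
    (hg : ∀ ρ : ℝ, 0 < ρ → 0 ≤ g ρ ∧ g ρ = 1 / (ρ + β / (1 + g ρ))) :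
    IsMaxOn (fun ρ : ℝ => γe * g ρ * (1 + (ρ / β) * (1 + g ρ) ^ 2) / (γe + (1 + g ρ) ^ 2))
      (Set.Ioi 0) (β / γe) ∧
    γe * g (β / γe) * (1 + ((β / γe) / β) * (1 + g (β / γe)) ^ 2) / (γe + (1 + g (β / γe)) ^ 2)
      = g (β / γe) := by
  have hγe' : γe ≠ 0 := ne_of_gt hγe
  have hβ' : β ≠ 0 := ne_of_gt hβ
  have hρ₀ : (0:ℝ) < β / γe := div_pos hβ hγe
  obtain ⟨ha0, heqa⟩ := hg (β / γe) hρ₀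
  set a := g (β / γe) with ha
  have h1a : (0:ℝ) < 1 + a := by linarith
  have hda : (0:ℝ) < β / γe + β / (1 + a) := by positivity
  have hapos : 0 < a := by rw [heqa]; positivity
  have h2 : a * (β / γe + β / (1 + a)) = 1 := by
    nth_rewrite 1 [heqa]; exact one_div_mul_cancel hda.ne'
  have E1 : γe * (1 + a - β * a) = β * a * (1 + a) := by
    field_simp at h2
    linarith [h2]
  have hs : 0 < 1 + a - β * a := by nlinarith [mul_pos hβ (mul_pos hapos h1a)]
  have hDa : (0:ℝ) < γe + (1 + a) ^ 2 := by positivity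
  have heqval : γe * a * (1 + ((β / γe) / β) * (1 + a) ^ 2) / (γe + (1 + a) ^ 2) = a := by
    rw [div_eq_iff hDa.ne']
    field_simp
  refine ⟨?_, heqval⟩
  intro ρ hρmem
  simp only [Set.mem_Ioi] at hρmem
  obtain ⟨hb0, heqb⟩ := hg ρ hρmem
  set b := g ρ with hb
  have h1b : (0:ℝ) < 1 + b := by linarith
  have hdb : (0:ℝ) < ρ + β / (1 + b) := by positivity
  have hbpos : 0 < b := by rw [heqb]; positivity
  have h3 : b * (ρ + β / (1 + b)) = 1 := by
    nth_rewrite 1 [heqb]; exact one_div_mul_cancel hdb.ne'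
  have E2 : ρ * b * (1 + b) + β * b = 1 + b := by
    field_simp at h3
    linarith [h3]
  have hDb : (0:ℝ) < γe + (1 + b) ^ 2 := by positivity
  show γe * b * (1 + ρ / β * (1 + b) ^ 2) / (γe + (1 + b) ^ 2) ≤
      γe * a * (1 + ((β / γe) / β) * (1 + a) ^ 2) / (γe + (1 + a) ^ 2)
  rw [heqval, div_le_iff₀ hDb]
  have hLHS : γe * b * (1 + ρ / β * (1 + b) ^ 2) * β = γe * ((1 + b) ^ 2 - β * b ^ 2) := by
    field_simp
    linear_combination (1 + b) * E2
  have key : (1 + a - β * a) *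
      (a * β * γe + a * β * (1 + b) ^ 2 - γe * (1 + b) ^ 2 + γe * β * b ^ 2)
      = β ^ 2 * a * (a - b) ^ 2 := by
    linear_combination (a * β - (1 + b) ^ 2 + β * b ^ 2) * E1
  have hG : 0 ≤ a * β * γe + a * β * (1 + b) ^ 2 - γe * (1 + b) ^ 2 + γe * β * b ^ 2 := by
    nlinarith [key, hs, sq_nonneg (a - b), mul_nonneg (mul_nonneg (sq_nonneg β) hapos.le) (sq_nonneg (a - b))]
  have hmul : γe * b * (1 + ρ / β * (1 + b) ^ 2) * β ≤ a * (γe + (1 + b) ^ 2) * β := by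
    rw [hLHS]; nlinarith [hG]
  exact le_of_mul_le_mul_right hmul hβ
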